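/- arXiv:2603.04812 — 3 statements merged into one kernel-verified Lean document; each statement's English description precedes it below -/
import Mathlib

section
/- Let n ≥ 0, let C be an invertible (n+2)×(n+2) real matrix, and let A ⊆ ℝ^{n+1} be a nonempty closed convex set. Write ι : ℝ^{n+1} → ℝ^{n+2} for the homogeneous lift ι(x) = (x, 1). Then the double polar recovers A exactly: {a ∈ ℝ^{n+1} : ∀ b ∈ ℝ^{n+2}, (∀ x ∈ A, ι(x)ᵀ C b ≥ 0) → bᵀ Cᵀ ι(a) ≥ 0} = A. (Polarity involution: Δ*_C(Δ_C(A)) = A on the affine slice of homogeneous coordinates.) -/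
open Matrix

lemma snoc_dot (m : ℕ) (x g : Fin (m+1) → ℝ) (t u : ℝ) :
    (Fin.snoc x t : Fin (m+2) → ℝ) ⬝ᵥ (Fin.snoc g u : Fin (m+2) → ℝ)
      = x ⬝ᵥ g + t * u := by
  simp [dotProduct, Fin.sum_univ_castSucc]

theorem polarity_involution_affine
    (n : ℕ) (C : Matrix (Fin (n + 2)) (Fin (n + 2)) ℝ) (hC : IsUnit C)
    (A : Set (Fin (n + 1) → ℝ)) (hne : A.Nonempty)
    (hclosed : IsClosed A) (hconv : Convex ℝ A) :
    {a : Fin (n + 1) → ℝ | ∀ b : Fin (n + 2) → ℝ,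
        (∀ x ∈ A, (Fin.snoc x 1 : Fin (n + 2) → ℝ) ⬝ᵥ (C *ᵥ b) ≥ 0) →
        b ⬝ᵥ (Cᵀ *ᵥ (Fin.snoc a 1 : Fin (n + 2) → ℝ)) ≥ 0} = A := by
  have hdet : IsUnit C.det := (Matrix.isUnit_iff_isUnit_det C).mp hC
  have key : ∀ (b v : Fin (n+2) → ℝ), b ⬝ᵥ (Cᵀ *ᵥ v) = v ⬝ᵥ (C *ᵥ b) := by
    intro b v
    rw [Matrix.mulVec_transpose, dotProduct_comm, Matrix.dotProduct_mulVec]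
  ext a
  simp only [Set.mem_setOf_eq]
  constructor
  · intro h
    by_contra ha
    obtain ⟨f, u, hfa, hfA⟩ := geometric_hahn_banach_point_closed hconv hclosed ha
    set g : Fin (n+1) → ℝ := fun i => f (Pi.single i 1) with hg
    have hfx : ∀ x : Fin (n+1) → ℝ, f x = x ⬝ᵥ g := by
      intro x
      conv_lhs => rw [pi_eq_sum_univ x]
      rw [map_sum]
      simp only [dotProduct, hg, mul_comm, _root_.map_smul, smul_eq_mul]
      refine Finset.sum_congr rfl fun i _ => ?_
      congr 2
      funext j
      simp [Pi.single_apply, eq_comm]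
    set c : Fin (n+2) → ℝ := Fin.snoc g (-u) with hc
    have hCb : C *ᵥ (C⁻¹ *ᵥ c) = c := by
      rw [Matrix.mulVec_mulVec, Matrix.mul_nonsing_inv _ hdet, Matrix.one_mulVec]
    have := h (C⁻¹ *ᵥ c) ?_
    · rw [key, hCb, hc, snoc_dot, ← hfx] at this
      linarith
    · intro x hx
      rw [hCb, hc, snoc_dot, ← hfx]
      have := hfA x hx
      linarith
  · intro ha b hb
    rw [key]
    exact hb a ha
end

section
/- Let F : ℝⁿ → ℝ be any function and let F* : ℝⁿ → EReal denote its Legendre–Fenchel conjugate F*(η) = ⨆_{θ ∈ ℝⁿ} (⟨θ, η⟩ − F(θ)) (supremum taken in the extended reals). For all η ∈ ℝⁿ and y* ∈ ℝ, the homogeneous point (η, y*, 1) ∈ ℝ^{n+2} belongs to the Legendre polar Δ_{C_L}({(θ, F(θ), 1) : θ ∈ ℝⁿ}) if and only if y* ≥ F*(η) (as extended reals). In other words, the λ = 1 slice of the Legendre polar of the lifted graph of F is exactly the lifted epigraph of the convex conjugate F*. -/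
open Matrix

/-- The Legendre cost matrix `C_L = [[-I_n, 0, 0], [0, 0, 1], [0, 1, 0]]`. -/
def legendreCost (n : ℕ) : Matrix (Fin (n + 2)) (Fin (n + 2)) ℝ :=
  Matrix.of fun i j =>
    if i.val < n ∧ j.val < n then (if i = j then -1 else 0)
    else if (i.val = n ∧ j.val = n + 1) ∨ (i.val = n + 1 ∧ j.val = n) then 1
    else 0

/-- Homogeneous lift of `(θ, u, s) ∈ ℝⁿ × ℝ × ℝ` into `ℝ^{n+2}`. -/
def homLift {n : ℕ} (θ : Fin n → ℝ) (u s : ℝ) : Fin (n + 2) → ℝ :=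
  Fin.snoc (Fin.snoc θ u) s

lemma legendreCost_mulVec (n : ℕ) (η : Fin n → ℝ) (v t : ℝ) :
    legendreCost n *ᵥ homLift η v t = homLift (-η) t v := by
  funext i
  refine Fin.lastCases ?_ (fun i => Fin.lastCases ?_ (fun i => ?_) i) i
  · simp [mulVec, dotProduct, Fin.sum_univ_castSucc, homLift, legendreCost]
    exact Finset.sum_eq_zero fun x _ => if_neg (Nat.ne_of_lt x.is_lt)
  · simp [mulVec, dotProduct, Fin.sum_univ_castSucc, homLift, legendreCost]
    exact Finset.sum_eq_zero fun x _ => if_neg (by omega)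
  · simp [mulVec, dotProduct, Fin.sum_univ_castSucc, homLift, legendreCost,
      Fin.castSucc_inj, Finset.sum_ite_eq, Nat.ne_of_lt i.is_lt,
      if_neg (show ¬(i.val = n + 1) by omega)]

lemma homLift_dot (n : ℕ) (θ η : Fin n → ℝ) (u s u' s' : ℝ) :
    homLift θ u s ⬝ᵥ homLift η u' s' = θ ⬝ᵥ η + u * u' + s * s' := by
  simp [homLift, dotProduct, Fin.sum_univ_castSucc]

theorem legendre_polar_of_graph_is_epigraph_of_conjugate
    (n : ℕ) (F : (Fin n → ℝ) → ℝ) (η : Fin n → ℝ) (ystar : ℝ) :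
    (∀ θ : Fin n → ℝ,
        homLift θ (F θ) 1 ⬝ᵥ (legendreCost n *ᵥ homLift η ystar 1) ≥ 0) ↔
      (⨆ θ : Fin n → ℝ, ((θ ⬝ᵥ η - F θ : ℝ) : EReal)) ≤ (ystar : EReal) := by
  rw [iSup_le_iff]
  refine forall_congr' fun θ => ?_
  rw [legendreCost_mulVec, homLift_dot, EReal.coe_le_coe_iff]
  simp [dotProduct_neg]
  constructor <;> intro h <;> linarith
end

section
/- Let n ≥ 0 and let C be an invertible (n+2)×(n+2) real matrix. Define the affine deformation matrix M_T = C⁻¹ · C_L (so that C = C_L · M_T⁻¹). Then for every set A ⊆ ℝ^{n+2}, the polar satisfies Δ_C(A) = M_T '' Δ_{C_L}(A), i.e., Δ_C(A) is the image of the Legendre polar Δ_{C_L}(A) under the linear map b ↦ M_T b. (A quadratic polarity is a transformed convex body of the Legendre polarity.) -/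
open Matrix

def lsig (n : ℕ) (i : Fin (n + 2)) : Fin (n + 2) :=
  if i.val < n then i else if i.val = n then ⟨n + 1, by omega⟩ else ⟨n, by omega⟩

lemma legendreCost_eq (n : ℕ) (i j : Fin (n + 2)) :
    legendreCost n i j = if j = lsig n i then (if i.val < n then -1 else 1) else 0 := by
  have hi := i.isLt
  have hj := j.isLt
  unfold legendreCost lsig
  simp only [of_apply, Fin.ext_iff, apply_ite Fin.val]
  split_ifs <;> first | rfl | omega

lemma lsig_lsig (n : ℕ) (i : Fin (n + 2)) : lsig n (lsig n i) = i := by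
  have hi := i.isLt
  simp only [lsig, Fin.ext_iff, apply_ite Fin.val]
  split_ifs <;> omega

lemma lsig_lt (n : ℕ) (i : Fin (n + 2)) : (lsig n i).val < n ↔ i.val < n := by
  have hi := i.isLt
  simp only [lsig, apply_ite Fin.val]
  split_ifs <;> omega

lemma legendreCost_sq (n : ℕ) : legendreCost n * legendreCost n = 1 := by
  ext i j
  rw [mul_apply]
  simp only [legendreCost_eq]
  rw [Finset.sum_eq_single (lsig n i)]
  · rw [if_pos rfl, lsig_lsig]
    by_cases h : j = i
    · subst h
      rw [if_pos rfl]
      simp [lsig_lt, Matrix.one_apply]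
      split_ifs <;> norm_num
    · simp [Matrix.one_apply, h, Ne.symm h]
  · intro k _ hk
    rw [if_neg hk, zero_mul]
  · intro h
    exact absurd (Finset.mem_univ _) h

theorem quadratic_polarity_as_transformed_legendre_polar
    (n : ℕ) (C : Matrix (Fin (n + 2)) (Fin (n + 2)) ℝ) (hC : IsUnit C)
    (A : Set (Fin (n + 2) → ℝ)) :
    {b : Fin (n + 2) → ℝ | ∀ a ∈ A, a ⬝ᵥ (C *ᵥ b) ≥ 0} =
      (fun b => (C⁻¹ * legendreCost n) *ᵥ b) ''
        {b : Fin (n + 2) → ℝ | ∀ a ∈ A, a ⬝ᵥ (legendreCost n *ᵥ b) ≥ 0} := by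
  have hdet : IsUnit C.det := (Matrix.isUnit_iff_isUnit_det C).mp hC
  have hCinv : C * C⁻¹ = 1 := Matrix.mul_nonsing_inv C hdet
  have hinvC : C⁻¹ * C = 1 := Matrix.nonsing_inv_mul C hdet
  have hL := legendreCost_sq n
  set L := legendreCost n
  ext b
  constructor
  · intro hb
    refine ⟨(L * C) *ᵥ b, ?_, ?_⟩
    · intro a ha
      have : L *ᵥ ((L * C) *ᵥ b) = C *ᵥ b := by
        rw [Matrix.mulVec_mulVec, ← Matrix.mul_assoc, hL, Matrix.one_mul]
      rw [this]
      exact hb a ha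
    · show (C⁻¹ * L) *ᵥ ((L * C) *ᵥ b) = b
      rw [Matrix.mulVec_mulVec, Matrix.mul_assoc, ← Matrix.mul_assoc L, hL,
        Matrix.one_mul, hinvC, Matrix.one_mulVec]
  · rintro ⟨b', hb', rfl⟩
    intro a ha
    have : C *ᵥ ((C⁻¹ * L) *ᵥ b') = L *ᵥ b' := by
      rw [Matrix.mulVec_mulVec, ← Matrix.mul_assoc, hCinv, Matrix.one_mul]
    rw [this]
    exact hb' a ha
end
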